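/- For any ε ∈ ℝ^n, any points x_1,…,x_n ∈ ℝ^d, and any w, w̃ ∈ ℝ^d, one has | √(εᵀ K^{(w)} ε) − √(εᵀ K^{(w̃)} ε) | ≤ Σ_{i=1}^n |ε_i| √( |(w − w̃)ᵀ x_i| ). In particular, if ‖·‖ is a norm on ℝ^d with dual norm ‖·‖*, this is at most √(‖w − w̃‖) · Σ_{i=1}^n |ε_i| √(‖x_i‖*). -/

import Mathlib

open MeasureTheory ProbabilityTheory Real

noncomputable section

/-- `h` is a square-integrable weak-derivative representation of `g` (so `g 0 = 0`). -/
def IsHRep (g h : ℝ → ℝ) : Prop :=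
  Measurable h ∧ MeasureTheory.Integrable (fun t => h t ^ 2) ∧
    ∀ x : ℝ, g x = ∫ t in (0 : ℝ)..x, h t

/-- Membership in the Sobolev space `H`. -/
def MemH (g : ℝ → ℝ) : Prop := ∃ h, IsHRep g h

/-- The Sobolev norm `‖g‖_H = (∫ (g')²)^{1/2}`. -/
def HNorm (g : ℝ → ℝ) : ℝ :=
  sInf {r : ℝ | ∃ h, IsHRep g h ∧ r = Real.sqrt (∫ t : ℝ, h t ^ 2)}

/-- The unit ball of `H`. -/
def HUnitBall : Set (ℝ → ℝ) := {g | MemH g ∧ HNorm g ≤ 1}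

/-- The dot product on `ℝ^d`. -/
def dotp {d : ℕ} (w x : Fin d → ℝ) : ℝ := ∑ a, w a * x a

/-- `N` is a norm on `ℝ^d`. -/
def IsNorm {d : ℕ} (N : (Fin d → ℝ) → ℝ) : Prop :=
  (∀ x, 0 ≤ N x) ∧ (∀ x, N x = 0 ↔ x = 0) ∧ (∀ (t : ℝ) (x), N (t • x) = |t| * N x) ∧
    ∀ x y, N (x + y) ≤ N x + N y

/-- The dual norm `‖x‖_* = sup_{N w ≤ 1} wᵀx`. -/
def dualNorm {d : ℕ} (N : (Fin d → ℝ) → ℝ) (x : Fin d → ℝ) : ℝ :=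
  sSup {s : ℝ | ∃ w, N w ≤ 1 ∧ s = dotp w x}

/-- Standard Gaussian measure on `ℝ^n`. -/
def stdGaussianPi (n : ℕ) : Measure (Fin n → ℝ) :=
  MeasureTheory.Measure.pi fun _ => gaussianReal 0 1

/-- The Gaussian complexity `G_n` of the class
`{x ↦ g(wᵀx) : N w = 1, ‖g‖_H ≤ 1}` under covariate law `μX`. -/
def gaussComplexity (d n : ℕ) (N : (Fin d → ℝ) → ℝ) (μX : Measure (Fin d → ℝ)) : ℝ :=
  ∫ x : Fin n → Fin d → ℝ,
    (∫ ε : Fin n → ℝ,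
      sSup {s : ℝ | ∃ w, N w = 1 ∧ ∃ g ∈ HUnitBall,
        s = (n : ℝ)⁻¹ * ∑ i, ε i * g (dotp w (x i))} ∂(stdGaussianPi n))
    ∂(MeasureTheory.Measure.pi fun _ : Fin n => μX)

/-- `(c, μ, g)` is a valid representation of `f ∈ F_∞`:
`f x = c + ∫ g_w(wᵀx) dμ(w)` with `μ` a probability measure on the `N`-unit sphere,
each `g_w ∈ H`, and all relevant integrals existing. -/
def IsFRep {d : ℕ} (N : (Fin d → ℝ) → ℝ) (f : (Fin d → ℝ) → ℝ) (c : ℝ)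
    (μ : Measure (Fin d → ℝ)) (g : (Fin d → ℝ) → ℝ → ℝ) : Prop :=
  IsProbabilityMeasure μ ∧ (∀ᵐ w ∂μ, N w = 1) ∧ (∀ w, MemH (g w)) ∧
    (∀ x, MeasureTheory.Integrable (fun w => g w (dotp w x)) μ) ∧
    MeasureTheory.Integrable (fun w => HNorm (g w)) μ ∧
    ∀ x, f x = c + ∫ w, g w (dotp w x) ∂μ

/-- Membership in `F_∞`. -/
def MemFInfty {d : ℕ} (N : (Fin d → ℝ) → ℝ) (f : (Fin d → ℝ) → ℝ) : Prop :=
  ∃ c μ g, IsFRep N f c μ g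

/-- `Ω₀(f)`: infimum of `∫ ‖g_w‖_H dμ(w)` over representations of `f`. -/
def Omega0 {d : ℕ} (N : (Fin d → ℝ) → ℝ) (f : (Fin d → ℝ) → ℝ) : ℝ :=
  sInf {r : ℝ | ∃ c μ g, IsFRep N f c μ g ∧ r = ∫ w, HNorm (g w) ∂μ}

/-- `Ω(f) = max(|f(0)|, Ω₀(f))`. -/
def OmegaP {d : ℕ} (N : (Fin d → ℝ) → ℝ) (f : (Fin d → ℝ) → ℝ) : ℝ :=
  max |f 0| (Omega0 N f)

/-- Expected risk. -/
def trueRisk {d : ℕ} (ℓ : ℝ → ℝ → ℝ) (μXY : Measure ((Fin d → ℝ) × ℝ))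
    (f : (Fin d → ℝ) → ℝ) : ℝ := ∫ p, ℓ p.2 (f p.1) ∂μXY

/-- Empirical risk on a sample `ω`. -/
def empRisk {d n : ℕ} (ℓ : ℝ → ℝ → ℝ) (ω : Fin n → (Fin d → ℝ) × ℝ)
    (f : (Fin d → ℝ) → ℝ) : ℝ := (n : ℝ)⁻¹ * ∑ i, ℓ (ω i).2 (f (ω i).1)

/-- `Z` is subgaussian with variance proxy `v` under `μ`. -/
def IsSubG {Ω : Type*} [MeasurableSpace Ω] (μ : Measure Ω) (Z : Ω → ℝ) (v : ℝ) : Prop :=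
  ∀ t : ℝ, 0 < t →
    max (μ {ω | t ≤ Z ω}).toReal (μ {ω | Z ω ≤ -t}).toReal ≤ Real.exp (-t ^ 2 / (2 * v))

/-- The Brownian kernel. -/
def brownianK (a b : ℝ) : ℝ := (|a| + |b| - |a - b|) / 2

/-- Brownian kernel matrix of projected data. -/
def KMat {d n : ℕ} (x : Fin n → Fin d → ℝ) (w : Fin d → ℝ) : Matrix (Fin n) (Fin n) ℝ :=
  Matrix.of fun i i' => brownianK (dotp w (x i)) (dotp w (x i'))


noncomputable def phi (a : ℝ) : ℝ → ℝ :=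
  fun t => (Set.Ioc 0 a).indicator (fun _ => (1:ℝ)) t - (Set.Ioc a 0).indicator (fun _ => (1:ℝ)) t

lemma phi_mul (a b t : ℝ) :
    phi a t * phi b t = (Set.Ioc 0 (min a b)).indicator (fun _ => (1:ℝ)) t
      + (Set.Ioc (max a b) 0).indicator (fun _ => (1:ℝ)) t := by
  rcases le_or_gt t 0 with ht | ht
  · have e1 : ∀ c : ℝ, (Set.Ioc 0 c).indicator (fun _ => (1:ℝ)) t = 0 := fun c =>
      Set.indicator_of_notMem (by simp only [Set.mem_Ioc, not_and, not_le]; intro h; linarith) _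
    simp only [phi, e1 a, e1 b, e1 (min a b), zero_sub, Set.indicator_apply, Set.mem_Ioc,
      max_lt_iff, ht, and_true]
    split_ifs <;> first | ring1 | simp_all
  · have e1 : ∀ c : ℝ, (Set.Ioc c 0).indicator (fun _ => (1:ℝ)) t = 0 := fun c =>
      Set.indicator_of_notMem (by simp only [Set.mem_Ioc, not_and, not_le]; intro h; linarith) _
    simp only [phi, e1 a, e1 b, e1 (max a b), sub_zero, Set.indicator_apply, Set.mem_Ioc,
      le_min_iff, ht, true_and]
    split_ifs <;> first | ring1 | simp_all

lemma integrable_ind (u v : ℝ) : Integrable ((Set.Ioc u v).indicator (fun _ => (1:ℝ))) := by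
  rw [integrable_indicator_iff measurableSet_Ioc]
  exact integrableOn_const measure_Ioc_lt_top.ne

lemma integral_ind (u v : ℝ) :
    ∫ t, (Set.Ioc u v).indicator (fun _ => (1:ℝ)) t = max (v - u) 0 := by
  rw [MeasureTheory.integral_indicator measurableSet_Ioc, MeasureTheory.setIntegral_const,
    measureReal_def, Real.volume_Ioc, smul_eq_mul, mul_one]
  rcases le_total (v - u) 0 with h | h
  · rw [ENNReal.ofReal_eq_zero.2 h, ENNReal.toReal_zero, max_eq_right h]
  · rw [ENNReal.toReal_ofReal h, max_eq_left h]

lemma max_min_eq (a b : ℝ) :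
    max (min a b - 0) 0 + max (0 - max a b) 0 = brownianK a b := by
  unfold brownianK
  rcases abs_cases a with ⟨ha, ha'⟩ | ⟨ha, ha'⟩ <;>
    rcases abs_cases b with ⟨hb, hb'⟩ | ⟨hb, hb'⟩ <;>
    rcases abs_cases (a - b) with ⟨hab, hab'⟩ | ⟨hab, hab'⟩ <;>
    simp only [min_def, max_def] <;> split_ifs <;> linarith

lemma integrable_phi_mul (a b : ℝ) : Integrable (fun t => phi a t * phi b t) := by
  have : (fun t => phi a t * phi b t) = fun t =>
      (Set.Ioc 0 (min a b)).indicator (fun _ => (1:ℝ)) t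
        + (Set.Ioc (max a b) 0).indicator (fun _ => (1:ℝ)) t := by
    funext t; exact phi_mul a b t
  rw [this]
  exact (integrable_ind _ _).add (integrable_ind _ _)

lemma integral_phi_mul (a b : ℝ) : ∫ t, phi a t * phi b t = brownianK a b := by
  have : (fun t => phi a t * phi b t) = fun t =>
      (Set.Ioc 0 (min a b)).indicator (fun _ => (1:ℝ)) t
        + (Set.Ioc (max a b) 0).indicator (fun _ => (1:ℝ)) t := by
    funext t; exact phi_mul a b t
  rw [this, integral_add (integrable_ind _ _) (integrable_ind _ _), integral_ind, integral_ind]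
  exact max_min_eq a b

lemma measurable_phi (a : ℝ) : Measurable (phi a) :=
  ((measurable_indicator_const_iff 1).2 measurableSet_Ioc).sub
    ((measurable_indicator_const_iff 1).2 measurableSet_Ioc)

lemma memL2_phi (a : ℝ) : MemLp (phi a) 2 (volume : Measure ℝ) := by
  refine (memLp_two_iff_integrable_sq (measurable_phi a).aestronglyMeasurable).2 ?_
  have := integrable_phi_mul a a
  simpa [sq] using this

noncomputable def Phi (a : ℝ) : Lp ℝ 2 (volume : Measure ℝ) := (memL2_phi a).toLp (phi a)

lemma inner_Phi (a b : ℝ) : (inner ℝ (Phi a) (Phi b) : ℝ) = brownianK a b := by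
  rw [MeasureTheory.L2.inner_def]
  rw [← integral_phi_mul a b]
  apply integral_congr_ae
  filter_upwards [(memL2_phi a).coeFn_toLp, (memL2_phi b).coeFn_toLp] with t h1 h2
  simp [Phi, h1, h2, RCLike.inner_apply, conj_trivial, mul_comm]

lemma norm_Phi_sub (a b : ℝ) : ‖Phi a - Phi b‖ = Real.sqrt |a - b| := by
  have h : ‖Phi a - Phi b‖ ^ 2 = |a - b| := by
    rw [← real_inner_self_eq_norm_sq]
    rw [inner_sub_sub_self]
    simp only [inner_Phi]
    unfold brownianK
    simp only [sub_self, abs_zero, abs_sub_comm b a]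
    ring
  rw [← Real.sqrt_sq (norm_nonneg _), h]

lemma isNorm_zero {d : ℕ} {N : (Fin d → ℝ) → ℝ} (hN : IsNorm N) : N 0 = 0 :=
  (hN.2.1 0).2 rfl

lemma isNorm_sub_le {d : ℕ} {N : (Fin d → ℝ) → ℝ} (hN : IsNorm N) (u v : Fin d → ℝ) :
    |N u - N v| ≤ N (u - v) := by
  have hneg : ∀ w : Fin d → ℝ, N (-w) = N w := by
    intro w
    have := hN.2.2.1 (-1) w
    simpa using this
  rw [abs_sub_le_iff]
  constructor
  · have := hN.2.2.2 (u - v) v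
    simpa using this
  · have := hN.2.2.2 (v - u) u
    rw [sub_add_cancel] at this
    have h2 : N (v - u) = N (u - v) := by rw [← hneg (u - v)]; congr 1; abel
    linarith [this, h2.symm.le]

lemma isNorm_upper {d : ℕ} {N : (Fin d → ℝ) → ℝ} (hN : IsNorm N) :
    ∃ C : ℝ, 0 ≤ C ∧ ∀ v : Fin d → ℝ, N v ≤ C * ‖v‖ := by
  classical
  set e : Fin d → Fin d → ℝ := fun a => Pi.single a 1 with he
  refine ⟨∑ a, N (e a), Finset.sum_nonneg fun a _ => hN.1 _, fun v => ?_⟩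
  have hv : v = ∑ a, v a • e a := by
    funext b
    simp [he, Finset.sum_apply, Pi.single_apply]
  calc N v = N (∑ a, v a • e a) := by rw [← hv]
    _ ≤ ∑ a, N (v a • e a) := Finset.le_sum_of_subadditive N (isNorm_zero hN).le hN.2.2.2 _ _
    _ = ∑ a, |v a| * N (e a) := by simp [hN.2.2.1]
    _ ≤ ∑ a, ‖v‖ * N (e a) := Finset.sum_le_sum fun a _ =>
        mul_le_mul_of_nonneg_right (norm_le_pi_norm v a) (hN.1 _)
    _ = (∑ a, N (e a)) * ‖v‖ := by rw [Finset.sum_mul]; exact Finset.sum_congr rfl fun a _ => mul_comm _ _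

lemma isNorm_continuous {d : ℕ} {N : (Fin d → ℝ) → ℝ} (hN : IsNorm N) : Continuous N := by
  obtain ⟨C, hC0, hC⟩ := isNorm_upper hN
  rw [Metric.continuous_iff]
  intro v ε hε
  by_cases hCpos : C = 0
  · refine ⟨1, one_pos, fun u _ => ?_⟩
    have h1 : N u = 0 := le_antisymm (by simpa [hCpos] using hC u) (hN.1 u)
    have h2 : N v = 0 := le_antisymm (by simpa [hCpos] using hC v) (hN.1 v)
    simpa [Real.dist_eq, h1, h2] using hε
  · have hCpos' : 0 < C := lt_of_le_of_ne hC0 (Ne.symm hCpos)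
    refine ⟨ε / C, div_pos hε hCpos', fun u hu => ?_⟩
    have h1 : |N u - N v| ≤ N (u - v) := isNorm_sub_le hN u v
    have h2 : N (u - v) ≤ C * ‖u - v‖ := hC _
    have h3 : ‖u - v‖ < ε / C := by rwa [dist_eq_norm] at hu
    calc dist (N u) (N v) = |N u - N v| := Real.dist_eq _ _
      _ ≤ C * ‖u - v‖ := le_trans h1 h2
      _ < C * (ε / C) := by exact mul_lt_mul_of_pos_left h3 hCpos'
      _ = ε := by field_simp

lemma isNorm_lower {d : ℕ} {N : (Fin d → ℝ) → ℝ} (hN : IsNorm N) :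
    ∃ C : ℝ, 0 ≤ C ∧ ∀ v : Fin d → ℝ, ‖v‖ ≤ C * N v := by
  rcases Nat.eq_zero_or_pos d with hd | hd
  · refine ⟨0, le_refl 0, fun v => ?_⟩
    have : v = 0 := funext fun a => absurd a.2 (by omega)
    simp [this]
  · haveI : Nontrivial (Fin d → ℝ) := by
      refine ⟨0, Pi.single ⟨0, hd⟩ 1, fun h => ?_⟩
      have := congrFun h ⟨0, hd⟩
      simp [Pi.single_apply] at this
    have hne : (Metric.sphere (0 : Fin d → ℝ) 1).Nonempty :=
      NormedSpace.sphere_nonempty.2 zero_le_one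
    obtain ⟨v0, hv0, hmin'⟩ := (isCompact_sphere (0 : Fin d → ℝ) 1).exists_isMinOn hne
      (isNorm_continuous hN).continuousOn
    have hmin : ∀ u ∈ Metric.sphere (0 : Fin d → ℝ) 1, N v0 ≤ N u := fun u hu => hmin' hu
    have hv0norm : ‖v0‖ = 1 := by simpa using mem_sphere_zero_iff_norm.1 hv0
    have hv0ne : v0 ≠ 0 := by intro h; rw [h] at hv0norm; simp at hv0norm
    have hm : 0 < N v0 := lt_of_le_of_ne (hN.1 v0) (fun h => hv0ne ((hN.2.1 v0).1 h.symm))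
    refine ⟨(N v0)⁻¹, inv_nonneg.2 hm.le, fun v => ?_⟩
    by_cases hv : v = 0
    · simp [hv, isNorm_zero hN]
    · have hvn : (0:ℝ) < ‖v‖ := norm_pos_iff.2 hv
      have hmem : ‖v‖⁻¹ • v ∈ Metric.sphere (0 : Fin d → ℝ) 1 := by
        rw [mem_sphere_zero_iff_norm, norm_smul, norm_inv, norm_norm]
        field_simp
      have h1 : N v0 ≤ N (‖v‖⁻¹ • v) := hmin _ hmem
      rw [hN.2.2.1, abs_inv, abs_norm] at h1
      have h2 : ‖v‖ * N v0 ≤ N v := by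
        calc ‖v‖ * N v0 ≤ ‖v‖ * (‖v‖⁻¹ * N v) := mul_le_mul_of_nonneg_left h1 hvn.le
          _ = N v := by field_simp
      calc ‖v‖ = (N v0)⁻¹ * (‖v‖ * N v0) := by field_simp
        _ ≤ (N v0)⁻¹ * N v := mul_le_mul_of_nonneg_left h2 (inv_nonneg.2 hm.le)

lemma dotp_smul {d : ℕ} (c : ℝ) (u x : Fin d → ℝ) : dotp (c • u) x = c * dotp u x := by
  simp [dotp, Finset.mul_sum, mul_assoc]

lemma dotp_neg {d : ℕ} (u x : Fin d → ℝ) : dotp (-u) x = -dotp u x := by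
  simp [dotp]

lemma dotp_sub {d : ℕ} (u v x : Fin d → ℝ) : dotp (u - v) x = dotp u x - dotp v x := by
  simp [dotp, sub_mul, Finset.sum_sub_distrib]

lemma dualNorm_facts {d : ℕ} {N : (Fin d → ℝ) → ℝ} (hN : IsNorm N) (x : Fin d → ℝ) :
    0 ≤ dualNorm N x ∧ ∀ u, |dotp u x| ≤ N u * dualNorm N x := by
  obtain ⟨C, hC0, hC⟩ := isNorm_lower hN
  have hxs : (0:ℝ) ≤ ∑ a, |x a| := Finset.sum_nonneg fun a _ => abs_nonneg _
  have bdd : BddAbove {s : ℝ | ∃ w, N w ≤ 1 ∧ s = dotp w x} := by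
    refine ⟨C * ∑ a, |x a|, fun s hs => ?_⟩
    obtain ⟨w, hw, rfl⟩ := hs
    calc dotp w x ≤ |dotp w x| := le_abs_self _
      _ ≤ ∑ a, |w a * x a| := by exact Finset.abs_sum_le_sum_abs _ _
      _ = ∑ a, |w a| * |x a| := by simp [abs_mul]
      _ ≤ ∑ a, ‖w‖ * |x a| := Finset.sum_le_sum fun a _ =>
          mul_le_mul_of_nonneg_right (norm_le_pi_norm w a) (abs_nonneg _)
      _ = ‖w‖ * ∑ a, |x a| := by rw [Finset.mul_sum]
      _ ≤ (C * N w) * ∑ a, |x a| := mul_le_mul_of_nonneg_right (hC w) hxs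
      _ ≤ (C * 1) * ∑ a, |x a| := by
          have : C * N w ≤ C * 1 := mul_le_mul_of_nonneg_left hw hC0
          exact mul_le_mul_of_nonneg_right this hxs
      _ = C * ∑ a, |x a| := by ring
  have mem0 : (0:ℝ) ∈ {s : ℝ | ∃ w, N w ≤ 1 ∧ s = dotp w x} :=
    ⟨0, by rw [isNorm_zero hN]; exact zero_le_one, by simp [dotp]⟩
  have hnn : 0 ≤ dualNorm N x := le_csSup bdd mem0
  refine ⟨hnn, fun u => ?_⟩
  by_cases hu : N u = 0
  · have h0 : u = 0 := (hN.2.1 u).1 hu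
    have hz : dotp u x = 0 := by simp [h0, dotp]
    rw [hz, hu, zero_mul, abs_zero]
  · have hupos : 0 < N u := lt_of_le_of_ne (hN.1 u) (Ne.symm hu)
    have hw1 : N ((N u)⁻¹ • u) = 1 := by
      rw [hN.2.2.1, abs_inv, abs_of_pos hupos, inv_mul_cancel₀ (ne_of_gt hupos)]
    have hwneg1 : N (-((N u)⁻¹ • u)) = 1 := by
      have := hN.2.2.1 (-1) ((N u)⁻¹ • u)
      simpa [hw1] using this
    have h1 : dotp ((N u)⁻¹ • u) x ≤ dualNorm N x :=
      le_csSup bdd ⟨_, hw1.le, rfl⟩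
    have h2 : dotp (-((N u)⁻¹ • u)) x ≤ dualNorm N x :=
      le_csSup bdd ⟨_, hwneg1.le, rfl⟩
    rw [dotp_neg, dotp_smul] at h2
    rw [dotp_smul] at h1
    rw [abs_le]
    constructor
    · have h3 := mul_le_mul_of_nonneg_left h2 hupos.le
      have h4 : N u * -((N u)⁻¹ * dotp u x) = -dotp u x := by rw [mul_neg, ← mul_assoc, mul_inv_cancel₀ (ne_of_gt hupos), one_mul]
      rw [h4] at h3
      linarith
    · have := mul_le_mul_of_nonneg_left h1 hupos.le
      calc dotp u x = N u * ((N u)⁻¹ * dotp u x) := by rw [← mul_assoc, mul_inv_cancel₀ (ne_of_gt hupos), one_mul]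
        _ ≤ N u * dualNorm N x := this

lemma quadform_eq_norm_sq {d n : ℕ} (x : Fin n → Fin d → ℝ) (ε : Fin n → ℝ) (v : Fin d → ℝ) :
    (∑ i, ∑ i', ε i * ε i' * brownianK (dotp v (x i)) (dotp v (x i'))) =
      ‖(∑ i, ε i • Phi (dotp v (x i)) : Lp ℝ 2 (volume : Measure ℝ))‖ ^ 2 := by
  rw [← real_inner_self_eq_norm_sq]
  rw [sum_inner]
  refine Finset.sum_congr rfl fun i _ => ?_
  rw [inner_sum]
  refine Finset.sum_congr rfl fun i' _ => ?_
  rw [real_inner_smul_left, real_inner_smul_right, inner_Phi]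
  ring

lemma main_aux {d n : ℕ} (x : Fin n → Fin d → ℝ) (ε : Fin n → ℝ) (w w' : Fin d → ℝ) :
    |Real.sqrt (∑ i, ∑ i', ε i * ε i' * brownianK (dotp w (x i)) (dotp w (x i'))) -
     Real.sqrt (∑ i, ∑ i', ε i * ε i' * brownianK (dotp w' (x i)) (dotp w' (x i')))| ≤
      ∑ i, |ε i| * Real.sqrt |dotp (w - w') (x i)| := by
  rw [quadform_eq_norm_sq, quadform_eq_norm_sq, Real.sqrt_sq (norm_nonneg _),
    Real.sqrt_sq (norm_nonneg _)]
  set u : Lp ℝ 2 (volume : Measure ℝ) := ∑ i, ε i • Phi (dotp w (x i)) with hu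
  set u' : Lp ℝ 2 (volume : Measure ℝ) := ∑ i, ε i • Phi (dotp w' (x i)) with hu'
  calc |‖u‖ - ‖u'‖| ≤ ‖u - u'‖ := abs_norm_sub_norm_le u u'
    _ = ‖∑ i, ε i • (Phi (dotp w (x i)) - Phi (dotp w' (x i)))‖ := by
        rw [hu, hu', ← Finset.sum_sub_distrib]
        congr 1
        refine Finset.sum_congr rfl fun i _ => ?_
        rw [smul_sub]
    _ ≤ ∑ i, ‖ε i • (Phi (dotp w (x i)) - Phi (dotp w' (x i)))‖ := norm_sum_le _ _
    _ = ∑ i, |ε i| * Real.sqrt |dotp (w - w') (x i)| := by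
        refine Finset.sum_congr rfl fun i _ => ?_
        rw [norm_smul, Real.norm_eq_abs, norm_Phi_sub, dotp_sub]

/-- Lipschitz-type bound for `w ↦ √(εᵀ K^{(w)} ε)`:
`|√(εᵀK^{(w)}ε) − √(εᵀK^{(w̃)}ε)| ≤ Σ_i |ε_i| √|(w−w̃)ᵀx_i|`, and in terms of a norm `N`
with dual norm `‖·‖_*`, this is at most `√(N(w−w̃)) Σ_i |ε_i| √(‖x_i‖_*)`. -/
theorem sqrt_quadform_kernel_lipschitz (d n : ℕ) (N : (Fin d → ℝ) → ℝ) (hN : IsNorm N)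
    (x : Fin n → Fin d → ℝ) (ε : Fin n → ℝ) (w w' : Fin d → ℝ) :
    |Real.sqrt (∑ i, ∑ i', ε i * ε i' * brownianK (dotp w (x i)) (dotp w (x i'))) -
        Real.sqrt (∑ i, ∑ i', ε i * ε i' * brownianK (dotp w' (x i)) (dotp w' (x i')))| ≤
      ∑ i, |ε i| * Real.sqrt |dotp (w - w') (x i)| ∧
    |Real.sqrt (∑ i, ∑ i', ε i * ε i' * brownianK (dotp w (x i)) (dotp w (x i'))) -
        Real.sqrt (∑ i, ∑ i', ε i * ε i' * brownianK (dotp w' (x i)) (dotp w' (x i')))| ≤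
      Real.sqrt (N (w - w')) * ∑ i, |ε i| * Real.sqrt (dualNorm N (x i)) := by
  constructor
  · exact main_aux x ε w w'
  · calc |Real.sqrt (∑ i, ∑ i', ε i * ε i' * brownianK (dotp w (x i)) (dotp w (x i'))) -
        Real.sqrt (∑ i, ∑ i', ε i * ε i' * brownianK (dotp w' (x i)) (dotp w' (x i')))| ≤
          ∑ i, |ε i| * Real.sqrt |dotp (w - w') (x i)| := main_aux x ε w w'
      _ ≤ ∑ i, |ε i| * (Real.sqrt (N (w - w')) * Real.sqrt (dualNorm N (x i))) := by
          refine Finset.sum_le_sum fun i _ => ?_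
          refine mul_le_mul_of_nonneg_left ?_ (abs_nonneg _)
          rw [← Real.sqrt_mul (hN.1 _)]
          exact Real.sqrt_le_sqrt ((dualNorm_facts hN (x i)).2 (w - w'))
      _ = Real.sqrt (N (w - w')) * ∑ i, |ε i| * Real.sqrt (dualNorm N (x i)) := by
          rw [Finset.mul_sum]
          exact Finset.sum_congr rfl fun i _ => by ring

end
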